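/- Let F be a complex Hilbert space and let (N₁, N₂, N₃) be pairwise commuting normal bounded operators on F with N₃ unitary, N₂ = N₂*N₃, ‖N₂‖ ≤ 2 and N₁*N₁ = I − (1/4)N₂*N₂. On the Hilbert space ℓ²(ℕ, F) of square-summable F-valued sequences, define T₁ by (T₁a)₀ = 0 and (T₁a)ₙ = N₁a_{n−1} for n ≥ 1, and define (T₂a)ₙ = N₂aₙ and (T₃a)ₙ = N₃aₙ for all n. Then T₁, T₂, T₃ are bounded, pairwise commuting, T₂ is normal, T₃ is unitary, T₂ = T₂*T₃, ‖T₂‖ ≤ 2, and T₁*T₁ = I − (1/4)T₂*T₂. -/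

import Mathlib

open ContinuousLinearMap
open scoped ENNReal

noncomputable section Aux

variable {F : Type*} [NormedAddCommGroup F] [InnerProductSpace ℂ F] [CompleteSpace F]

local notation "H" => lp (fun _ : ℕ => F) 2

lemma sq_summable (f : lp (fun _ : ℕ => F) 2) :
    Summable fun n => ‖f n‖ ^ (2 : ℝ≥0∞).toReal :=
  (lp.memℓp f).summable (by norm_num)

lemma mem_diag (N : F →L[ℂ] F) (f : H) : Memℓp (fun n => N (f n)) 2 := by
  apply memℓp_gen
  refine Summable.of_nonneg_of_le (fun n => Real.rpow_nonneg (norm_nonneg _) _)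
    (fun n => ?_) ((sq_summable f).mul_left (‖N‖ ^ (2 : ℝ≥0∞).toReal))
  calc ‖N (f n)‖ ^ (2 : ℝ≥0∞).toReal
      ≤ (‖N‖ * ‖f n‖) ^ (2 : ℝ≥0∞).toReal :=
        Real.rpow_le_rpow (norm_nonneg _) (N.le_opNorm _) (by norm_num)
    _ = ‖N‖ ^ (2 : ℝ≥0∞).toReal * ‖f n‖ ^ (2 : ℝ≥0∞).toReal :=
        Real.mul_rpow (norm_nonneg _) (norm_nonneg _)

lemma diag_tsum_le (N : F →L[ℂ] F) (f : H) :
    ∑' n, ‖N (f n)‖ ^ (2 : ℝ≥0∞).toReal ≤ (‖N‖ * ‖f‖) ^ (2 : ℝ≥0∞).toReal := by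
  have h1 : ∑' n, ‖N (f n)‖ ^ (2 : ℝ≥0∞).toReal
      ≤ ∑' n, ‖N‖ ^ (2 : ℝ≥0∞).toReal * ‖f n‖ ^ (2 : ℝ≥0∞).toReal := by
    refine Summable.tsum_le_tsum (fun n => ?_) ((mem_diag N f).summable (by norm_num))
      ((sq_summable f).mul_left _)
    calc ‖N (f n)‖ ^ (2 : ℝ≥0∞).toReal
        ≤ (‖N‖ * ‖f n‖) ^ (2 : ℝ≥0∞).toReal :=
          Real.rpow_le_rpow (norm_nonneg _) (N.le_opNorm _) (by norm_num)
      _ = ‖N‖ ^ (2 : ℝ≥0∞).toReal * ‖f n‖ ^ (2 : ℝ≥0∞).toReal :=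
          Real.mul_rpow (norm_nonneg _) (norm_nonneg _)
  calc ∑' n, ‖N (f n)‖ ^ (2 : ℝ≥0∞).toReal
      ≤ ∑' n, ‖N‖ ^ (2 : ℝ≥0∞).toReal * ‖f n‖ ^ (2 : ℝ≥0∞).toReal := h1
    _ = ‖N‖ ^ (2 : ℝ≥0∞).toReal * ∑' n, ‖f n‖ ^ (2 : ℝ≥0∞).toReal := tsum_mul_left
    _ = ‖N‖ ^ (2 : ℝ≥0∞).toReal * ‖f‖ ^ (2 : ℝ≥0∞).toReal := by
        rw [lp.norm_rpow_eq_tsum (by norm_num) f]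
    _ = (‖N‖ * ‖f‖) ^ (2 : ℝ≥0∞).toReal :=
        (Real.mul_rpow (norm_nonneg _) (norm_nonneg _)).symm

/-- The diagonal operator on `ℓ²(ℕ, F)`. -/
def diag (N : F →L[ℂ] F) : H →L[ℂ] H :=
  LinearMap.mkContinuous
    { toFun := fun f => ⟨fun n => N (f n), mem_diag N f⟩
      map_add' := fun f g => lp.ext (funext fun n => by
        show N ((f + g) n) = N (f n) + N (g n)
        simp [lp.coeFn_add, map_add])
      map_smul' := fun c f => lp.ext (funext fun n => by
        simp [lp.coeFn_smul, map_smul]) }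
    ‖N‖ (fun f =>
      lp.norm_le_of_tsum_le (by norm_num)
        (mul_nonneg (norm_nonneg _) (norm_nonneg _)) (diag_tsum_le N f))

@[simp] lemma diag_apply (N : F →L[ℂ] F) (f : H) (n : ℕ) : (diag N f) n = N (f n) := rfl

lemma diag_norm_le (N : F →L[ℂ] F) (f : H) : ‖diag N f‖ ≤ ‖N‖ * ‖f‖ :=
  lp.norm_le_of_tsum_le (by norm_num)
    (mul_nonneg (norm_nonneg _) (norm_nonneg _)) (diag_tsum_le N f)

/-- The underlying function of the weighted shift. -/
def shiftFun (N : F →L[ℂ] F) (f : ℕ → F) : ℕ → F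
  | 0 => 0
  | (m + 1) => N (f m)

@[simp] lemma shiftFun_zero (N : F →L[ℂ] F) (f : ℕ → F) : shiftFun N f 0 = 0 := rfl
@[simp] lemma shiftFun_succ (N : F →L[ℂ] F) (f : ℕ → F) (m : ℕ) :
    shiftFun N f (m + 1) = N (f m) := rfl

lemma mem_shiftW (N : F →L[ℂ] F) (f : H) : Memℓp (shiftFun N f) 2 := by
  apply memℓp_gen
  have h : Summable fun n => ‖shiftFun N f (n + 1)‖ ^ (2 : ℝ≥0∞).toReal := by
    simpa using ((mem_diag N f).summable (p := 2) (by norm_num))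
  exact (summable_nat_add_iff 1).mp h

lemma shiftW_tsum_le (N : F →L[ℂ] F) (f : H) :
    ∑' n, ‖shiftFun N f n‖ ^ (2 : ℝ≥0∞).toReal ≤ (‖N‖ * ‖f‖) ^ (2 : ℝ≥0∞).toReal := by
  have hs : Summable fun n => ‖shiftFun N f n‖ ^ (2 : ℝ≥0∞).toReal :=
    (mem_shiftW N f).summable (by norm_num)
  rw [Summable.tsum_eq_zero_add hs]
  simpa using diag_tsum_le N f

/-- The weighted unilateral shift on `ℓ²(ℕ, F)`. -/
def shiftW (N : F →L[ℂ] F) : H →L[ℂ] H :=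
  LinearMap.mkContinuous
    { toFun := fun f => ⟨shiftFun N f, mem_shiftW N f⟩
      map_add' := fun f g => lp.ext (funext fun n => by
        show shiftFun N (f + g) n = shiftFun N f n + shiftFun N g n
        cases n <;> simp [lp.coeFn_add, shiftFun])
      map_smul' := fun c f => lp.ext (funext fun n => by
        cases n <;> simp [lp.coeFn_smul, shiftFun]) }
    ‖N‖ (fun f =>
      lp.norm_le_of_tsum_le (by norm_num)
        (mul_nonneg (norm_nonneg _) (norm_nonneg _)) (shiftW_tsum_le N f))

@[simp] lemma shiftW_apply_zero (N : F →L[ℂ] F) (f : H) : (shiftW N f) 0 = 0 := rfl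
@[simp] lemma shiftW_apply_succ (N : F →L[ℂ] F) (f : H) (n : ℕ) :
    (shiftW N f) (n + 1) = N (f n) := rfl

lemma diag_mul (A B : F →L[ℂ] F) : diag A * diag B = diag (A * B) :=
  ContinuousLinearMap.ext fun f => lp.ext (funext fun n => rfl)

lemma diag_one : diag (1 : F →L[ℂ] F) = 1 :=
  ContinuousLinearMap.ext fun f => lp.ext (funext fun n => rfl)

lemma adjoint_diag (A : F →L[ℂ] F) : adjoint (diag A) = diag (adjoint A) :=
  ((ContinuousLinearMap.eq_adjoint_iff (diag (adjoint A)) (diag A)).mpr fun x y => by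
    rw [lp.inner_eq_tsum, lp.inner_eq_tsum]
    exact tsum_congr fun n => by
      simp [ContinuousLinearMap.adjoint_inner_left]).symm

lemma shiftW_comm_diag {N A : F →L[ℂ] F} (h : N * A = A * N) :
    shiftW N * diag A = diag A * shiftW N := by
  refine ContinuousLinearMap.ext fun f => lp.ext (funext fun n => ?_)
  match n with
  | 0 => show (0 : F) = A 0; simp
  | (m + 1) =>
    show N (A (f m)) = A (N (f m))
    simpa using congrArg (fun T : F →L[ℂ] F => T (f m)) h

lemma adjoint_shiftW_mul_self (N : F →L[ℂ] F) :
    adjoint (shiftW N) * shiftW N = diag (adjoint N * N) := by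
  refine ContinuousLinearMap.ext fun x => ext_inner_left ℂ fun v => ?_
  have h1 : (inner ℂ v ((adjoint (shiftW N) * shiftW N) x) : ℂ)
      = inner ℂ (shiftW N v) (shiftW N x) := by
    rw [ContinuousLinearMap.mul_apply, ContinuousLinearMap.adjoint_inner_right]
  rw [h1, lp.inner_eq_tsum, lp.inner_eq_tsum,
    Summable.tsum_eq_zero_add (lp.summable_inner (𝕜 := ℂ) (shiftW N v) (shiftW N x))]
  simp [ContinuousLinearMap.adjoint_inner_right]

lemma diag_smul (c : ℂ) (A : F →L[ℂ] F) : diag (c • A) = c • diag A :=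
  ContinuousLinearMap.ext fun f => lp.ext (funext fun n => by
    simp [lp.coeFn_smul])

lemma diag_sub (A B : F →L[ℂ] F) : diag (A - B) = diag A - diag B :=
  ContinuousLinearMap.ext fun f => lp.ext (funext fun n => by
    simp [lp.coeFn_sub])

end Aux


/-- If `(N₁, N₂, N₃)` is a pentablock unitary on `F`, then on `ℓ²(ℕ, F)` the triple
`(T₁, T₂, T₃)`, where `T₁` is the unilateral shift weighted by `N₁` and `T₂, T₃` act
diagonally by `N₂, N₃`, is a quasi pentablock unitary: the `Tᵢ` are bounded, pairwise
commuting, `T₂` is normal, `T₃` is unitary, `T₂ = T₂*T₃`, `‖T₂‖ ≤ 2` and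
`T₁*T₁ = I - ¼ T₂*T₂`. -/
theorem statement6 {F : Type*} [NormedAddCommGroup F] [InnerProductSpace ℂ F]
    [CompleteSpace F] (N₁ N₂ N₃ : F →L[ℂ] F)
    (h₁₂ : N₁ * N₂ = N₂ * N₁) (h₁₃ : N₁ * N₃ = N₃ * N₁) (h₂₃ : N₂ * N₃ = N₃ * N₂)
    (hn₁ : N₁ * adjoint N₁ = adjoint N₁ * N₁)
    (hn₂ : N₂ * adjoint N₂ = adjoint N₂ * N₂)
    (hn₃ : N₃ * adjoint N₃ = adjoint N₃ * N₃)
    (hu : adjoint N₃ * N₃ = 1 ∧ N₃ * adjoint N₃ = 1)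
    (hΓ : N₂ = adjoint N₂ * N₃) (hb : ‖N₂‖ ≤ 2)
    (hpu : adjoint N₁ * N₁ = 1 - (1/4 : ℂ) • (adjoint N₂ * N₂)) :
    ∃ T₁ T₂ T₃ : lp (fun _ : ℕ => F) 2 →L[ℂ] lp (fun _ : ℕ => F) 2,
      (∀ a : lp (fun _ : ℕ => F) 2, (T₁ a) 0 = 0 ∧ ∀ n : ℕ, (T₁ a) (n + 1) = N₁ (a n)) ∧
      (∀ (a : lp (fun _ : ℕ => F) 2) (n : ℕ), (T₂ a) n = N₂ (a n)) ∧
      (∀ (a : lp (fun _ : ℕ => F) 2) (n : ℕ), (T₃ a) n = N₃ (a n)) ∧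
      T₁ * T₂ = T₂ * T₁ ∧ T₁ * T₃ = T₃ * T₁ ∧ T₂ * T₃ = T₃ * T₂ ∧
      T₂ * adjoint T₂ = adjoint T₂ * T₂ ∧
      adjoint T₃ * T₃ = 1 ∧ T₃ * adjoint T₃ = 1 ∧
      T₂ = adjoint T₂ * T₃ ∧ ‖T₂‖ ≤ 2 ∧
      adjoint T₁ * T₁ = 1 - (1/4 : ℂ) • (adjoint T₂ * T₂) := by
  refine ⟨shiftW N₁, diag N₂, diag N₃,
    fun a => ⟨shiftW_apply_zero N₁ a, fun n => shiftW_apply_succ N₁ a n⟩,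
    fun a n => rfl, fun a n => rfl,
    shiftW_comm_diag h₁₂, shiftW_comm_diag h₁₃, ?_, ?_, ?_, ?_, ?_, ?_, ?_⟩
  · rw [diag_mul, diag_mul, h₂₃]
  · rw [adjoint_diag, diag_mul, diag_mul, hn₂]
  · rw [adjoint_diag, diag_mul, hu.1, diag_one]
  · rw [adjoint_diag, diag_mul, hu.2, diag_one]
  · rw [adjoint_diag, diag_mul, ← hΓ]
  · refine ContinuousLinearMap.opNorm_le_bound _ (by norm_num) fun x => ?_
    exact (diag_norm_le N₂ x).trans (mul_le_mul_of_nonneg_right hb (norm_nonneg x))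
  · rw [adjoint_shiftW_mul_self, hpu, diag_sub, diag_one, diag_smul, ← diag_mul, ← adjoint_diag]
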